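/- Let n = 2km with k odd and m ≥ 2. The set T = {(0, jm, jm mod n), (m, jm, (m+jm) mod n) : 0 ≤ j < 2k} is a latin trade in B_n whose disjoint mate T' is obtained by swapping the two symbols in each column of T; i.e., replacing T by T' in B_n yields a latin square. -/

import Mathlib

open scoped Classical

/-- A latin square of order `n`: each symbol occurs exactly once in each row and column. -/
def IsLatinSquare {n : ℕ} (L : Fin n → Fin n → Fin n) : Prop :=
  (∀ i, Function.Bijective fun j => L i j) ∧ (∀ j, Function.Bijective fun i => L i j)

/-- A `k`-plex of `L`: a set of cells with exactly `k` in each row, `k` in each column,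
and each symbol occurring exactly `k` times. -/
def IsPlex {n : ℕ} (L : Fin n → Fin n → Fin n) (k : ℕ) (K : Finset (Fin n × Fin n)) : Prop :=
  (∀ i, (K.filter fun p => p.1 = i).card = k) ∧
  (∀ j, (K.filter fun p => p.2 = j).card = k) ∧
  (∀ s, (K.filter fun p => L p.1 p.2 = s).card = k)

/-- `L` has a transversal, i.e. a `1`-plex. -/
def HasTransversal {n : ℕ} (L : Fin n → Fin n → Fin n) : Prop :=
  ∃ K, IsPlex L 1 K

/-- The latin square obtained from `Bₙ` by swapping the two symbols in cells
`(0, jm)` and `(m, jm)` for `0 ≤ j < 2k` (the columns are exactly the multiples of `m`). -/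
def swappedSquare (k m n : ℕ) [NeZero n] : Fin n → Fin n → Fin n := fun i j =>
  if ((i : ℕ) = 0 ∨ (i : ℕ) = m) ∧ m ∣ (j : ℕ) then
    (if (i : ℕ) = 0 then ((Fin.ofNat n m) + j) else j)
  else i + j

theorem stmt11 (k m n : ℕ) [NeZero n] (hk : Odd k) (hm : 2 ≤ m)
    (hn : n = 2 * k * m) :
    IsLatinSquare (swappedSquare k m n) := by
  have hk1 : 1 ≤ k := hk.pos
  have h2m : 2 * m ≤ n := by
    rw [hn]
    have : 2 * 1 * m ≤ 2 * k * m := Nat.mul_le_mul_right m (by omega)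
    omega
  have hmn : m < n := by omega
  have hmdn : m ∣ n := ⟨2 * k, by rw [hn]; ring⟩
  have hM : ((Fin.ofNat n m) : ℕ) = m := Nat.mod_eq_of_lt hmn
  have key : ∀ j : Fin n, (m ∣ (((Fin.ofNat n m) + j : Fin n) : ℕ)) ↔ m ∣ (j : ℕ) := by
    intro j
    rw [Fin.add_def, hM, Nat.dvd_mod_iff hmdn, Nat.dvd_add_right (dvd_refl m)]
  constructor
  · intro i
    apply Finite.injective_iff_bijective.mp
    by_cases hi0 : (i : ℕ) = 0
    · have hiz : i = 0 := Fin.ext (by simpa using hi0)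
      subst hiz
      intro a b hab
      simp only [swappedSquare, Fin.val_zero, eq_self_iff_true, true_or, true_and, if_pos,
        zero_add] at hab
      split_ifs at hab with h1 h2 h2
      · exact add_left_cancel hab
      · exfalso; apply h2; rw [← hab]; exact (key a).mpr h1
      · exfalso; apply h1; rw [hab]; exact (key b).mpr h2
      · exact hab
    · by_cases him : (i : ℕ) = m
      · have hiM : i = (Fin.ofNat n m) := Fin.ext (by rw [hM]; exact him)
        subst hiM
        intro a b hab
        have hm0 : ¬ (m = 0) := by omega
        simp only [swappedSquare, hM, eq_self_iff_true, or_true, true_and, hm0, if_false] at hab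
        split_ifs at hab with h1 h2 h2
        · exact hab
        · exfalso; apply h2; rw [hab] at h1; exact (key b).mp h1
        · exfalso; apply h1; rw [← hab] at h2; exact (key a).mp h2
        · exact add_left_cancel hab
      · intro a b hab
        simp only [swappedSquare, hi0, him, or_self, false_and, false_or, if_false] at hab
        exact add_left_cancel hab
  · intro j
    apply Finite.injective_iff_bijective.mp
    by_cases hj : m ∣ (j : ℕ)
    · have hf : ∀ i : Fin n, swappedSquare k m n i j =
          (if (i : ℕ) = 0 then (Fin.ofNat n m) else if (i : ℕ) = m then 0 else i) + j := by
        intro i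
        by_cases h0 : (i : ℕ) = 0
        · have : i = 0 := Fin.ext (by simpa using h0)
          subst this
          simp [swappedSquare, hj]
        · by_cases h1 : (i : ℕ) = m
          · have : i = (Fin.ofNat n m) := Fin.ext (by rw [hM]; exact h1)
            subst this
            have hm0 : ¬ (m = 0) := by omega
            simp [swappedSquare, hM, hj, hm0, Nat.mod_eq_of_lt hmn]
          · simp [swappedSquare, h0, h1, hj]
      intro a b hab
      simp only [hf] at hab
      have h := add_right_cancel hab
      split_ifs at h <;>
        · apply Fin.ext
          rw [Fin.ext_iff] at h
          try simp only [hM, Fin.val_zero] at h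
          omega
    · intro a b hab
      simp only [swappedSquare, hj, and_false, if_false, false_and] at hab
      exact add_right_cancel hab
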